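/- Let (z*, μ̲*, μ̄*) be a KKT point of the problem min_{z∈Z} f(z) subject to v̲ ≤ Az + a ≤ v̄, let z̃ ∈ Z be a strict Slater point with margin δ > 0, let γ ≥ 0, and let D : ℝᵐ → ℝ be differentiable with ‖∇D(Az + a)‖ ≤ G for all z ∈ Z. Then the incentive signal s* := Aᵀ(μ̲* − μ̄* − γ∇D(Az* + a)) is bounded; explicitly, ‖s*‖ ≤ ‖A‖_op · ((f(z̃) − f(z*))/δ + γG), where ‖A‖_op is the operator norm of A with respect to Euclidean norms. -/

import Mathlib

open scoped InnerProductSpace Matrix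

set_option maxHeartbeats 1000000

private lemma grad_ineq {n : ℕ} (f : EuclideanSpace ℝ (Fin n) → ℝ) (f' : EuclideanSpace ℝ (Fin n))
    (zs zt : EuclideanSpace ℝ (Fin n)) (hf : HasGradientAt f f' zs)
    (hfconv : ConvexOn ℝ Set.univ f) : ⟪f', zt - zs⟫_ℝ ≤ f zt - f zs := by
  set d := zt - zs
  set φ : ℝ → ℝ := fun t => f (zs + t • d) with hφ
  have hconv : ConvexOn ℝ Set.univ φ := by
    have := hfconv.comp_affineMap (AffineMap.lineMap zs zt : ℝ →ᵃ[ℝ] EuclideanSpace ℝ (Fin n))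
    convert this.subset (by simp) (convex_univ) using 1
    any_goals rfl
    ext t
    simp [hφ, AffineMap.lineMap_apply, d]
    congr 1
    module
  have hderiv : HasDerivAt φ ⟪f', d⟫_ℝ 0 := by
    have hc : HasDerivAt (fun t : ℝ => zs + t • d) d 0 := by
      simpa using ((hasDerivAt_id (0:ℝ)).smul_const d).const_add zs
    have hf2 : HasFDerivAt f ((InnerProductSpace.toDual ℝ _) f') (zs + (0:ℝ) • d) := by
      simpa using hf.hasFDerivAt
    have := hf2.comp_hasDerivAt 0 hc
    exact this
  have := hconv.le_slope_of_hasDerivAt (Set.mem_univ 0) (Set.mem_univ 1) zero_lt_one hderiv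
  rw [slope_def_field] at this
  simpa [hφ, d] using this

private lemma transpose_norm_bound {n m : ℕ} (A : Matrix (Fin m) (Fin n) ℝ)
    (w : EuclideanSpace ℝ (Fin m)) :
    ‖Matrix.toEuclideanLin Aᵀ w‖ ≤
      ‖LinearMap.toContinuousLinearMap (Matrix.toEuclideanLin A)‖ * ‖w‖ := by
  set T := LinearMap.toContinuousLinearMap (Matrix.toEuclideanLin A)
  set u := Matrix.toEuclideanLin Aᵀ w with hu
  have hadj : Matrix.toEuclideanLin Aᵀ = LinearMap.adjoint (Matrix.toEuclideanLin A) := by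
    rw [← Matrix.toEuclideanLin_conjTranspose_eq_adjoint,
      Matrix.conjTranspose_eq_transpose_of_trivial]
  have key : ‖u‖ ^ 2 ≤ (‖T‖ * ‖w‖) * ‖u‖ := by
    have h1 : ‖u‖ ^ 2 = ⟪u, u⟫_ℝ := (real_inner_self_eq_norm_sq u).symm
    have h2 : ⟪u, u⟫_ℝ = ⟪w, Matrix.toEuclideanLin A u⟫_ℝ := by
      rw [hu, hadj, LinearMap.adjoint_inner_left]
    have h3 : ⟪w, Matrix.toEuclideanLin A u⟫_ℝ ≤ ‖w‖ * ‖Matrix.toEuclideanLin A u‖ :=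
      real_inner_le_norm _ _
    have h4 : ‖Matrix.toEuclideanLin A u‖ ≤ ‖T‖ * ‖u‖ := T.le_opNorm u
    calc ‖u‖ ^ 2 = ⟪w, Matrix.toEuclideanLin A u⟫_ℝ := by rw [h1, h2]
      _ ≤ ‖w‖ * ‖Matrix.toEuclideanLin A u‖ := h3
      _ ≤ ‖w‖ * (‖T‖ * ‖u‖) := by
          exact mul_le_mul_of_nonneg_left h4 (norm_nonneg _)
      _ = (‖T‖ * ‖w‖) * ‖u‖ := by ring
  rcases eq_or_lt_of_le (norm_nonneg u) with h0 | h0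
  · rw [← h0]; positivity
  · have := le_of_mul_le_mul_right (by nlinarith [key] : ‖u‖ * ‖u‖ ≤ (‖T‖ * ‖w‖) * ‖u‖) h0
    exact this


/-- Boundedness of the incentive signal
`s* = Aᵀ(μ̲* − μ̄* − γ ∇D(A z* + a))` at a KKT point, given a strict Slater point:
`‖s*‖ ≤ ‖A‖_op ((f(z̃) − f(z*))/δ + γ G)`. -/
theorem incentive_signal_bounded {n m : ℕ}
    (Z : Set (EuclideanSpace ℝ (Fin n)))
    (hZne : Z.Nonempty) (hZcomp : IsCompact Z) (hZconv : Convex ℝ Z)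
    (f : EuclideanSpace ℝ (Fin n) → ℝ)
    (f' : EuclideanSpace ℝ (Fin n) → EuclideanSpace ℝ (Fin n))
    (hf : ∀ x, HasGradientAt f (f' x) x)
    (hfconv : ConvexOn ℝ Set.univ f)
    (A : Matrix (Fin m) (Fin n) ℝ) (a vlo vhi : EuclideanSpace ℝ (Fin m))
    -- the KKT point (z*, μ̲*, μ̄*)
    (zs : EuclideanSpace ℝ (Fin n)) (μlo μhi : EuclideanSpace ℝ (Fin m))
    (hzs : zs ∈ Z) (hμlo : ∀ j, 0 ≤ μlo j) (hμhi : ∀ j, 0 ≤ μhi j)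
    (hfeas : ∀ j, vlo j ≤ Matrix.toEuclideanLin A zs j + a j ∧
      Matrix.toEuclideanLin A zs j + a j ≤ vhi j)
    (hVI : ∀ z ∈ Z, 0 ≤ ⟪f' zs + Matrix.toEuclideanLin Aᵀ (μhi - μlo), z - zs⟫_ℝ)
    (hcomplo : ∑ j, μlo j * (Matrix.toEuclideanLin A zs j + a j - vlo j) = 0)
    (hcomphi : ∑ j, μhi j * (vhi j - Matrix.toEuclideanLin A zs j - a j) = 0)
    -- strict Slater point z̃ with margin δ > 0
    (zt : EuclideanSpace ℝ (Fin n)) (δ : ℝ) (hδ : 0 < δ) (hzt : zt ∈ Z)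
    (hslater : ∀ j, vlo j + δ ≤ Matrix.toEuclideanLin A zt j + a j ∧
      Matrix.toEuclideanLin A zt j + a j ≤ vhi j - δ)
    -- the function D, its gradient, and the gradient bound G on A(Z) + a
    (γ : ℝ) (hγ : 0 ≤ γ)
    (D : EuclideanSpace ℝ (Fin m) → ℝ)
    (D' : EuclideanSpace ℝ (Fin m) → EuclideanSpace ℝ (Fin m))
    (hD : ∀ v, HasGradientAt D (D' v) v)
    (G : ℝ) (hG : ∀ z ∈ Z, ‖D' (Matrix.toEuclideanLin A z + a)‖ ≤ G) :
    ‖Matrix.toEuclideanLin Aᵀ (μlo - μhi - γ • D' (Matrix.toEuclideanLin A zs + a))‖ ≤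
      ‖LinearMap.toContinuousLinearMap (Matrix.toEuclideanLin A)‖ *
        ((f zt - f zs) / δ + γ * G) := by
  set bs := Matrix.toEuclideanLin A zs with hbs
  set bt := Matrix.toEuclideanLin A zt with hbt
  -- componentwise complementarity
  have hlo0 : ∀ j, μlo j * (bs j + a j - vlo j) = 0 := by
    have := (Finset.sum_eq_zero_iff_of_nonneg (fun j _ =>
      mul_nonneg (hμlo j) (by linarith [(hfeas j).1]))).mp hcomplo
    exact fun j => this j (Finset.mem_univ j)
  have hhi0 : ∀ j, μhi j * (vhi j - bs j - a j) = 0 := by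
    have := (Finset.sum_eq_zero_iff_of_nonneg (fun j _ =>
      mul_nonneg (hμhi j) (by linarith [(hfeas j).2]))).mp hcomphi
    exact fun j => this j (Finset.mem_univ j)
  set S := ∑ j, (μlo j + μhi j) with hS
  have hSnn : 0 ≤ S := Finset.sum_nonneg fun j _ => by linarith [hμlo j, hμhi j]
  -- the VI at zt plus complementarity gives the dual bound
  have hadj : Matrix.toEuclideanLin Aᵀ = LinearMap.adjoint (Matrix.toEuclideanLin A) := by
    rw [← Matrix.toEuclideanLin_conjTranspose_eq_adjoint,
      Matrix.conjTranspose_eq_transpose_of_trivial]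
  have hVI2 := hVI zt hzt
  rw [inner_add_left] at hVI2
  have hgrad : ⟪f' zs, zt - zs⟫_ℝ ≤ f zt - f zs := grad_ineq f (f' zs) zs zt (hf zs) hfconv
  have hinner2 : ⟪Matrix.toEuclideanLin Aᵀ (μhi - μlo), zt - zs⟫_ℝ
      = ∑ j, (μhi j - μlo j) * (bt j - bs j) := by
    rw [hadj, LinearMap.adjoint_inner_left, map_sub]
    simp only [PiLp.inner_apply, RCLike.inner_apply, conj_trivial]
    exact Finset.sum_congr rfl fun j _ => by simp [hbt, hbs, mul_comm]
  have hsum_le : ∑ j, (μhi j - μlo j) * (bt j - bs j) ≤ -(δ * S) := by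
    have : ∀ j, (μhi j - μlo j) * (bt j - bs j) ≤ -(δ * (μlo j + μhi j)) := by
      intro j
      have h1 := hlo0 j
      have h2 := hhi0 j
      have h3 := (hslater j).1
      have h4 := (hslater j).2
      have h5 := hμlo j
      have h6 := hμhi j
      nlinarith [mul_le_mul_of_nonneg_left h3 h5, mul_le_mul_of_nonneg_left h4 h6]
    calc ∑ j, (μhi j - μlo j) * (bt j - bs j) ≤ ∑ j, -(δ * (μlo j + μhi j)) :=
          Finset.sum_le_sum fun j _ => this j
      _ = -(δ * S) := by rw [hS, Finset.mul_sum]; simp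
  have hSbound : S ≤ (f zt - f zs) / δ := by
    rw [le_div_iff₀ hδ]
    nlinarith [hVI2, hgrad, hinner2, hsum_le]
  -- norm of μlo - μhi bounded by S
  have hμnorm : ‖μlo - μhi‖ ≤ S := by
    have h1 : ‖μlo - μhi‖ ^ 2 ≤ S ^ 2 := by
      rw [← real_inner_self_eq_norm_sq]
      simp only [PiLp.inner_apply, RCLike.inner_apply, conj_trivial]
      have hterm : ∀ j ∈ Finset.univ, ((μlo - μhi) j) * ((μlo - μhi) j)
          ≤ (μlo j + μhi j) ^ 2 := fun j _ => by
        have := hμlo j; have := hμhi j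
        simp only [PiLp.sub_apply]
        nlinarith
      calc (∑ j, ((μlo - μhi) j) * ((μlo - μhi) j)) ≤ ∑ j, (μlo j + μhi j) ^ 2 :=
            Finset.sum_le_sum hterm
        _ ≤ (∑ j, (μlo j + μhi j)) ^ 2 :=
            Finset.sum_sq_le_sq_sum_of_nonneg fun j _ => by linarith [hμlo j, hμhi j]
        _ = S ^ 2 := by rw [hS]
    nlinarith [h1, norm_nonneg (μlo - μhi), hSnn]
  -- assemble
  set w := μlo - μhi - γ • D' (bs + a) with hw
  have hwnorm : ‖w‖ ≤ S + γ * G := by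
    calc ‖w‖ ≤ ‖μlo - μhi‖ + ‖γ • D' (bs + a)‖ := norm_sub_le _ _
      _ ≤ S + γ * G := by
          have : ‖γ • D' (bs + a)‖ = γ * ‖D' (bs + a)‖ := by
            rw [norm_smul, Real.norm_eq_abs, abs_of_nonneg hγ]
          rw [this]
          exact add_le_add hμnorm (mul_le_mul_of_nonneg_left (hG zs hzs) hγ)
  calc ‖Matrix.toEuclideanLin Aᵀ w‖
      ≤ ‖LinearMap.toContinuousLinearMap (Matrix.toEuclideanLin A)‖ * ‖w‖ :=
        transpose_norm_bound A w
    _ ≤ ‖LinearMap.toContinuousLinearMap (Matrix.toEuclideanLin A)‖ *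
        ((f zt - f zs) / δ + γ * G) := by
        apply mul_le_mul_of_nonneg_left _ (norm_nonneg _)
        calc ‖w‖ ≤ S + γ * G := hwnorm
          _ ≤ (f zt - f zs) / δ + γ * G := by linarith
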